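/- Let T be a triangulated category. Given triangles N₁ → L₁ ⊕ N₂ → L₂ → N₁[1] (with first map having components f₁ : N₁ → L₁ and v : N₁ → N₂, and second map having components u : L₁ → L₂ and g₁ : N₂ → L₂) and M₁ → N₁ ⊕ M₂ → N₂ → M₁[1] (with first map having components f₂ : M₁ → N₁ and w : M₁ → M₂, and second map having components v : N₁ → N₂ and g₂ : M₂ → N₂), there exists a triangle M₁ → L₁ ⊕ M₂ → L₂ → M₁[1]. -/

import Mathlib

open CategoryTheory CategoryTheory.Limits CategoryTheory.Pretriangulated

/-- Given triangles `N₁ → L₁ ⊕ N₂ → L₂ → N₁[1]` and `M₁ → N₁ ⊕ M₂ → N₂ → M₁[1]`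
sharing the morphism `v : N₁ → N₂`, there exists a triangle
`M₁ → L₁ ⊕ M₂ → L₂ → M₁[1]` (Lemma 4.6 of the paper, via the octahedral axiom). -/
theorem ladder_of_triangles {C : Type*} [Category C] [HasZeroObject C]
    [Preadditive C] [HasBinaryBiproducts C] [HasShift C ℤ]
    [∀ n : ℤ, (shiftFunctor C n).Additive] [Pretriangulated C] [IsTriangulated C]
    {N₁ N₂ L₁ L₂ M₁ M₂ : C}
    (f₁ : N₁ ⟶ L₁) (v : N₁ ⟶ N₂) (u : L₁ ⟶ L₂) (g₁ : N₂ ⟶ L₂)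
    (f₂ : M₁ ⟶ N₁) (w : M₁ ⟶ M₂) (g₂ : M₂ ⟶ N₂)
    (δ₁ : L₂ ⟶ N₁⟦(1 : ℤ)⟧) (δ₂ : N₂ ⟶ M₁⟦(1 : ℤ)⟧)
    (h₁ : Triangle.mk (biprod.lift f₁ v) (biprod.desc u g₁) δ₁ ∈ distTriang C)
    (h₂ : Triangle.mk (biprod.lift f₂ w) (biprod.desc v g₂) δ₂ ∈ distTriang C) :
    ∃ (a : M₁ ⟶ L₁ ⊞ M₂) (b : L₁ ⊞ M₂ ⟶ L₂) (c : L₂ ⟶ M₁⟦(1 : ℤ)⟧),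
      Triangle.mk a b c ∈ distTriang C := by
  -- a cone on `v`
  obtain ⟨Cv, p, q, hv⟩ := Pretriangulated.distinguished_cocone_triangle v
  -- Octahedron 1 : for `biprod.lift f₁ v ≫ biprod.snd = v`
  have hb₁ : Triangle.mk (biprod.snd : L₁ ⊞ N₂ ⟶ N₂) (0 : N₂ ⟶ L₁⟦(1 : ℤ)⟧)
      (-(biprod.inl : L₁ ⟶ L₁ ⊞ N₂)⟦(1 : ℤ)⟧') ∈ distTriang C :=
    rot_of_distTriang _ (binaryBiproductTriangle_distinguished L₁ N₂)
  have comm1 : biprod.lift f₁ v ≫ (biprod.snd : L₁ ⊞ N₂ ⟶ N₂) = v := biprod.lift_snd _ _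
  let O₁ := Triangulated.someOctahedron comm1 h₁ hb₁ hv
  -- Octahedron 2 : for `biprod.inl ≫ biprod.desc v g₂ = v`
  have hb₂ : Triangle.mk (biprod.inl : N₁ ⟶ N₁ ⊞ M₂) (biprod.snd : N₁ ⊞ M₂ ⟶ M₂)
      (0 : M₂ ⟶ N₁⟦(1 : ℤ)⟧) ∈ distTriang C :=
    binaryBiproductTriangle_distinguished N₁ M₂
  have h₂' : Triangle.mk (biprod.desc v g₂) δ₂ (-(biprod.lift f₂ w)⟦(1 : ℤ)⟧') ∈ distTriang C :=
    rot_of_distTriang _ h₂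
  have comm2 : (biprod.inl : N₁ ⟶ N₁ ⊞ M₂) ≫ biprod.desc v g₂ = v := biprod.inl_desc _ _
  let O₂ := Triangulated.someOctahedron comm2 hb₂ h₂' hv
  -- the composition `O₂.m₁ ≫ O₁.m₃ : M₂ ⟶ L₁⟦1⟧` vanishes
  have h0 : (biprod.snd : N₁ ⊞ M₂ ⟶ M₂) ≫ (O₂.m₁ ≫ O₁.m₃) = 0 := by
    rw [← Category.assoc, O₂.comm₁, Category.assoc, O₁.comm₃, comp_zero]
  have comm3 : O₂.m₁ ≫ O₁.m₃ = 0 := by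
    calc O₂.m₁ ≫ O₁.m₃ = ((biprod.inr : M₂ ⟶ N₁ ⊞ M₂) ≫ biprod.snd) ≫ (O₂.m₁ ≫ O₁.m₃) := by
          rw [biprod.inr_snd, Category.id_comp]
      _ = (biprod.inr : M₂ ⟶ N₁ ⊞ M₂) ≫ ((biprod.snd : N₁ ⊞ M₂ ⟶ M₂) ≫ (O₂.m₁ ≫ O₁.m₃)) := by rw [Category.assoc]
      _ = 0 := by rw [h0, comp_zero]
  -- Octahedron 3 : for `O₂.m₁ ≫ O₁.m₃ = 0 : M₂ ⟶ L₁⟦1⟧`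
  have hb₃ : Triangle.mk (0 : M₂ ⟶ L₁⟦(1 : ℤ)⟧)
      (-(biprod.inl : L₁ ⟶ L₁ ⊞ M₂)⟦(1 : ℤ)⟧') (-(biprod.snd : L₁ ⊞ M₂ ⟶ M₂)⟦(1 : ℤ)⟧') ∈
        distTriang C :=
    rot_of_distTriang _ (rot_of_distTriang _ (binaryBiproductTriangle_distinguished L₁ M₂))
  let O₃ := Triangulated.someOctahedron comm3 O₂.mem (rot_of_distTriang _ O₁.mem) hb₃
  -- the triangle `M₁⟦1⟧ ⟶ (L₁ ⊞ M₂)⟦1⟧ ⟶ L₂⟦1⟧ ⟶ M₁⟦1⟧⟦1⟧` given by `O₃`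
  have hTT : Triangle.mk O₃.m₁ O₃.m₃ ((-(O₁.m₁⟦(1 : ℤ)⟧')) ≫ (O₂.m₃⟦(1 : ℤ)⟧')) ∈
      distTriang C := O₃.mem
  -- shift it back by `-1`
  have hS : (Pretriangulated.Triangle.shiftFunctor C (-1)).obj
      (Triangle.mk O₃.m₁ O₃.m₃ ((-(O₁.m₁⟦(1 : ℤ)⟧')) ≫ (O₂.m₃⟦(1 : ℤ)⟧'))) ∈ distTriang C := by
    rw [← Pretriangulated.Triangle.shiftFunctor_eq]
    exact Pretriangulated.Triangle.shift_distinguished _ hTT (-1)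
  set S := (Pretriangulated.Triangle.shiftFunctor C (-1)).obj
      (Triangle.mk O₃.m₁ O₃.m₃ ((-(O₁.m₁⟦(1 : ℤ)⟧')) ≫ (O₂.m₃⟦(1 : ℤ)⟧'))) with hSdef
  let e₁ : (M₁⟦(1 : ℤ)⟧)⟦(-1 : ℤ)⟧ ≅ M₁ :=
    (shiftFunctorCompIsoId C (1 : ℤ) (-1 : ℤ) (by norm_num)).app M₁
  let e₂ : ((L₁ ⊞ M₂)⟦(1 : ℤ)⟧)⟦(-1 : ℤ)⟧ ≅ L₁ ⊞ M₂ :=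
    (shiftFunctorCompIsoId C (1 : ℤ) (-1 : ℤ) (by norm_num)).app (L₁ ⊞ M₂)
  let e₃ : (L₂⟦(1 : ℤ)⟧)⟦(-1 : ℤ)⟧ ≅ L₂ :=
    (shiftFunctorCompIsoId C (1 : ℤ) (-1 : ℤ) (by norm_num)).app L₂
  refine ⟨e₁.inv ≫ S.mor₁ ≫ e₂.hom, e₂.inv ≫ S.mor₂ ≫ e₃.hom,
    e₃.inv ≫ S.mor₃ ≫ (e₁.hom⟦(1 : ℤ)⟧'), isomorphic_distinguished _ hS _ ?_⟩
  refine Triangle.isoMk _ _ e₁.symm e₂.symm e₃.symm ?_ ?_ ?_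
  · exact (fun (X Y Z W : C) (a : X ⟶ Y) (b : Y ⟶ Z) (e : Z ≅ W) =>
      (by simp : (a ≫ b ≫ e.hom) ≫ e.inv = a ≫ b)) _ _ _ _ _ _ _
  · exact (fun (X Y Z W : C) (a : X ⟶ Y) (b : Y ⟶ Z) (e : Z ≅ W) =>
      (by simp : (a ≫ b ≫ e.hom) ≫ e.inv = a ≫ b)) _ _ _ _ _ _ _
  · dsimp
    exact (fun (X Y Z W : C) (a : X ⟶ Y) (b : Y ⟶ (shiftFunctor C (1 : ℤ)).obj Z) (e : Z ≅ W) =>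
      (by simp [← Functor.map_comp] : (a ≫ b ≫ e.hom⟦(1 : ℤ)⟧') ≫ e.inv⟦(1 : ℤ)⟧' = a ≫ b))
      _ _ _ _ _ _ _
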